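/- arXiv:math/0307071 — 4 statements merged into one kernel-verified Lean document; each statement's English description precedes it below -/
import Mathlib

section
/- Let A ≥ c₂ > c₁ > 0 be real numbers and set ζ = (c₂ − c₁)/(A − c₁). Given real numbers a₁, …, a_N satisfying Σ_{j=1}^{N} a_j ≥ c₂·N and a_j ≤ A for all 1 ≤ j ≤ N, there exist an integer l ≥ ζ·N and integers 1 ≤ n₁ < n₂ < ⋯ < n_l ≤ N such that Σ_{j=n+1}^{n_i} a_j ≥ c₁·(n_i − n) for every 0 ≤ n < n_i and every i = 1, …, l. -/
/-- **Pliss lemma.** Let `A ≥ c₂ > c₁ > 0` and `ζ = (c₂ - c₁)/(A - c₁)`. Given real numbers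
`a 1, …, a N` with `∑_{j=1}^N a j ≥ c₂ * N` and `a j ≤ A` for all `1 ≤ j ≤ N`, there exist
`l ≥ ζ * N` and `1 ≤ n₁ < n₂ < ⋯ < n_l ≤ N` such that
`∑_{j=n+1}^{n_i} a j ≥ c₁ * (n_i - n)` for every `0 ≤ n < n_i` and every `i`. -/
theorem pliss_lemma (N : ℕ) (A c₁ c₂ : ℝ) (hc₁ : 0 < c₁) (hc₁c₂ : c₁ < c₂) (hc₂A : c₂ ≤ A)
    (a : ℕ → ℝ)
    (hsum : c₂ * N ≤ ∑ j ∈ Finset.Icc 1 N, a j)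
    (hbound : ∀ j, 1 ≤ j → j ≤ N → a j ≤ A) :
    ∃ (l : ℕ) (n : Fin l → ℕ),
      ((c₂ - c₁) / (A - c₁)) * N ≤ (l : ℝ) ∧
      StrictMono n ∧
      (∀ i, 1 ≤ n i ∧ n i ≤ N) ∧
      (∀ (i : Fin l) (m : ℕ), m < n i →
        c₁ * ((n i : ℝ) - (m : ℝ)) ≤ ∑ j ∈ Finset.Icc (m + 1) (n i), a j) := by
  classical
  have hA : (0:ℝ) < A - c₁ := by linarith
  set b : ℕ → ℝ := fun j => a j - c₁ with hbdef
  set S : ℕ → ℝ := fun n => ∑ j ∈ Finset.Ioc 0 n, b j with hSdef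
  set P : ℕ → Prop := fun n => ∀ m, m < n → S m ≤ S n with hPdef
  have hIcc : ∀ m n : ℕ, Finset.Icc (m+1) n = Finset.Ioc m n := by
    intro m n; ext x; simp
  have hsplit : ∀ m n : ℕ, m ≤ n → S n - S m = ∑ j ∈ Finset.Ioc m n, b j := by
    intro m n hmn
    have h := Finset.sum_Ioc_consecutive b (Nat.zero_le m) hmn
    simp only [hSdef]
    linarith [h]
  have hsumb : ∀ m n : ℕ, m ≤ n →
      ∑ j ∈ Finset.Ioc m n, b j = (∑ j ∈ Finset.Ioc m n, a j) - ((n:ℝ) - m) * c₁ := by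
    intro m n hmn
    simp only [hbdef, Finset.sum_sub_distrib, Finset.sum_const, Nat.card_Ioc, nsmul_eq_mul]
    rw [Nat.cast_sub hmn]
  have key : ∀ n, n ≤ N → ∀ m, m ≤ n →
      S m ≤ (((Finset.Ioc 0 n).filter P).card : ℝ) * (A - c₁) := by
    intro n
    induction n with
    | zero =>
      intro _ m hm
      interval_cases m
      simp only [hSdef, Finset.Ioc_self, Finset.sum_empty]
      positivity
    | succ n ih =>
      intro hn1 m hm
      have hn : n ≤ N := Nat.le_of_succ_le hn1
      have hmono : (((Finset.Ioc 0 n).filter P).card : ℝ) ≤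
          (((Finset.Ioc 0 (n+1)).filter P).card : ℝ) := by
        exact_mod_cast Finset.card_le_card (Finset.filter_subset_filter _
          (Finset.Ioc_subset_Ioc_right (Nat.le_succ n)))
      have step : ∀ m', m' ≤ n → S m' ≤ (((Finset.Ioc 0 (n+1)).filter P).card : ℝ) * (A - c₁) := by
        intro m' hm'
        calc S m' ≤ _ := ih hn m' hm'
        _ ≤ _ := mul_le_mul_of_nonneg_right hmono hA.le
      rcases Nat.lt_succ_iff_lt_or_eq.mp (Nat.lt_succ_of_le hm) with hlt | heq
      · exact step m (Nat.lt_succ_iff.mp hlt)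
      · subst heq
        by_cases hP : P (n+1)
        · have hcard : ((Finset.Ioc 0 (n+1)).filter P).card
              = ((Finset.Ioc 0 n).filter P).card + 1 := by
            have h1 : Finset.Ioc 0 (n+1) = insert (n+1) (Finset.Ioc 0 n) := by
              ext x; simp; omega
            rw [h1, Finset.filter_insert, if_pos hP,
              Finset.card_insert_of_notMem (by simp)]
          have hSn1 : S (n+1) = S n + b (n+1) := by
            have := hsplit n (n+1) (Nat.le_succ n)
            have h2 : Finset.Ioc n (n+1) = {n+1} := Nat.Ioc_succ_singleton n
            rw [h2, Finset.sum_singleton] at this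
            linarith
          have hb1 : b (n+1) ≤ A - c₁ := by
            have := hbound (n+1) (Nat.succ_le_succ (Nat.zero_le n)) hn1
            simp only [hbdef]; linarith
          have hSn : S n ≤ (((Finset.Ioc 0 n).filter P).card : ℝ) * (A - c₁) :=
            ih hn n le_rfl
          rw [hcard]
          push_cast
          linarith
        · simp only [hPdef, not_forall] at hP
          obtain ⟨m', hm', hS⟩ := hP
          push_neg at hS
          have := step m' (Nat.lt_succ_iff.mp hm')
          linarith
  set E := (Finset.Ioc 0 N).filter P with hE
  refine ⟨E.card, fun i => E.orderEmbOfFin rfl i, ?_, ?_, ?_, ?_⟩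
  · have h1 : Finset.Icc 1 N = Finset.Ioc 0 N := by ext x; simp; omega
    have hSN : (c₂ - c₁) * N ≤ S N := by
      have := hsumb 0 N (Nat.zero_le N)
      simp only [Nat.cast_zero, sub_zero] at this
      simp only [hSdef] at this ⊢
      rw [this, ← h1]
      nlinarith
    have hkey := key N le_rfl N le_rfl
    rw [div_mul_eq_mul_div, div_le_iff₀ hA]
    calc (c₂ - c₁) * N ≤ S N := hSN
    _ ≤ _ := hkey
  · exact (E.orderEmbOfFin rfl).strictMono
  · intro i
    obtain ⟨hx, -⟩ := Finset.mem_filter.mp (Finset.orderEmbOfFin_mem E rfl i)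
    rw [Finset.mem_Ioc] at hx
    dsimp only
    omega
  · intro i m hm
    dsimp only at hm ⊢
    obtain ⟨-, hP⟩ := Finset.mem_filter.mp (Finset.orderEmbOfFin_mem E rfl i)
    have hle : S m ≤ S (E.orderEmbOfFin rfl i) := hP m hm
    have h1 := hsplit m _ hm.le
    have h2 := hsumb m _ hm.le
    rw [hIcc]
    linarith
end

section
/- Let c > 0 and A ≥ 3c/2 with A > c, and let (a_j)_{j≥0} be a sequence of real numbers such that a_j ≥ −A for all j and limsup_{n→∞} (1/n) Σ_{j=0}^{n−1} a_j ≤ −2c. Then the set H of c-hyperbolic times of (a_j) has lower density at least ζ = (c/2)/(A − c) > 0, i.e. liminf_{n→∞} #{m ∈ H : 1 ≤ m ≤ n}/n ≥ ζ; in particular (a_j) has infinitely many c-hyperbolic times. -/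
open scoped Classical

/-- `n ≥ 1` is a `c`-hyperbolic time of the sequence `a` if
`∑_{j=n-k}^{n-1} a j ≤ -c * k` for every `1 ≤ k ≤ n`. -/
def IsHyperbolicTime (c : ℝ) (a : ℕ → ℝ) (n : ℕ) : Prop :=
  ∀ k, 1 ≤ k → k ≤ n → ∑ j ∈ Finset.Ico (n - k) n, a j ≤ -c * (k : ℝ)

/-- Auxiliary sum `S n = ∑_{j<n} (a j + c)`. -/
noncomputable def Sseq (c : ℝ) (a : ℕ → ℝ) (n : ℕ) : ℝ := ∑ j ∈ Finset.range n, (a j + c)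

lemma Sseq_sub (c : ℝ) (a : ℕ → ℝ) {i n : ℕ} (h : i ≤ n) :
    Sseq c a n - Sseq c a i = (∑ j ∈ Finset.Ico i n, a j) + c * ((n : ℝ) - i) := by
  rw [Sseq, Sseq, ← Finset.sum_Ico_eq_sub _ h, Finset.sum_add_distrib, Finset.sum_const,
    Nat.card_Ico, nsmul_eq_mul, Nat.cast_sub h]
  ring

lemma isHyperbolicTime_iff (c : ℝ) (a : ℕ → ℝ) (n : ℕ) :
    IsHyperbolicTime c a n ↔ ∀ i < n, Sseq c a n ≤ Sseq c a i := by
  constructor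
  · intro h i hi
    have hk := h (n - i) (by omega) (by omega)
    have h1 : n - (n - i) = i := by omega
    rw [h1] at hk
    have h2 := Sseq_sub c a (le_of_lt hi)
    have hcast : ((n - i : ℕ) : ℝ) = (n : ℝ) - i := by
      rw [Nat.cast_sub hi.le]
    rw [hcast] at hk
    nlinarith [hk, h2]
  · intro h k hk1 hkn
    have hi : n - k < n := by omega
    have hs := h (n - k) hi
    have h2 := Sseq_sub c a (Nat.sub_le n k)
    have hcast : ((n - k : ℕ) : ℝ) = (n : ℝ) - k := by
      rw [Nat.cast_sub hkn]
    rw [hcast] at h2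
    nlinarith [hs, h2]

/-- Number of hyperbolic times in `[1, n]`. -/
noncomputable def hcount (c : ℝ) (a : ℕ → ℝ) (n : ℕ) : ℕ :=
  ((Finset.Icc 1 n).filter (fun m => IsHyperbolicTime c a m)).card

lemma Icc_succ_insert (n : ℕ) : Finset.Icc 1 (n + 1) = insert (n + 1) (Finset.Icc 1 n) := by
  ext x; simp [Finset.mem_Icc, Finset.mem_insert]; omega

lemma hcount_mono (c : ℝ) (a : ℕ → ℝ) (n : ℕ) : hcount c a n ≤ hcount c a (n + 1) :=
  Finset.card_le_card
    (Finset.filter_subset_filter _ (Finset.Icc_subset_Icc_right (Nat.le_succ n)))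

lemma key (c A : ℝ) (hAc : c < A) (a : ℕ → ℝ) (hbound : ∀ j, -A ≤ a j) :
    ∀ n, ∀ i, i ≤ n → -(A - c) * (hcount c a n : ℝ) ≤ Sseq c a i := by
  intro n
  induction n with
  | zero =>
    intro i hi
    interval_cases i
    simp only [Sseq, Finset.range_zero, Finset.sum_empty]
    have : hcount c a 0 = 0 := by simp [hcount]
    rw [this]
    simp
  | succ n ih =>
    have hmono : (hcount c a n : ℝ) ≤ (hcount c a (n + 1) : ℝ) :=
      Nat.cast_le.mpr (hcount_mono c a n)
    intro i hi
    by_cases h : i ≤ n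
    · nlinarith [ih i h]
    · have hieq : i = n + 1 := by omega
      subst hieq
      have hS : Sseq c a (n + 1) = Sseq c a n + (a n + c) := Finset.sum_range_succ _ n
      by_cases hhyp : IsHyperbolicTime c a (n + 1)
      · have hcard : hcount c a (n + 1) = hcount c a n + 1 := by
          unfold hcount
          rw [Icc_succ_insert, Finset.filter_insert, if_pos hhyp,
            Finset.card_insert_of_notMem]
          intro hmem
          have := Finset.mem_Icc.mp (Finset.mem_of_mem_filter _ hmem)
          omega
        have hb := hbound n
        have hSn := ih n le_rfl
        rw [hcard]
        push_cast
        nlinarith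
      · have hcard : hcount c a (n + 1) = hcount c a n := by
          unfold hcount
          rw [Icc_succ_insert, Finset.filter_insert, if_neg hhyp]
        obtain ⟨j, hj, hjS⟩ : ∃ j < n + 1, Sseq c a j < Sseq c a (n + 1) := by
          by_contra hcon
          push_neg at hcon
          exact hhyp ((isHyperbolicTime_iff c a (n + 1)).mpr
            (fun i hi => hcon i hi))
        have := ih j (by omega)
        rw [hcard]
        linarith

/-- If `c > 0`, `A ≥ 3c/2`, `A > c`, `a j ≥ -A` for all `j`, and
`limsup (1/n) ∑_{j<n} a j ≤ -2c`, then the set of `c`-hyperbolic times of `a` has lower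
density at least `ζ = (c/2)/(A - c) > 0`; in particular there are infinitely many
`c`-hyperbolic times. -/
theorem hyperbolic_times_positive_density (c A : ℝ) (hc : 0 < c)
    (hA : 3 * c / 2 ≤ A) (hAc : c < A)
    (a : ℕ → ℝ) (hbound : ∀ j, -A ≤ a j)
    (hexp : Filter.limsup (fun n : ℕ => (∑ j ∈ Finset.range n, a j) / (n : ℝ))
      Filter.atTop ≤ -2 * c) :
    (c / 2) / (A - c) ≤
      Filter.liminf
        (fun n : ℕ =>
          (((Finset.Icc 1 n).filter (fun m => IsHyperbolicTime c a m)).card : ℝ) / (n : ℝ))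
        Filter.atTop ∧
    {n : ℕ | IsHyperbolicTime c a n}.Infinite := by
  set u : ℕ → ℝ := fun n => (∑ j ∈ Finset.range n, a j) / (n : ℝ) with hu
  set v : ℕ → ℝ := fun n => ((hcount c a n : ℝ)) / (n : ℝ) with hv
  have hAc' : 0 < A - c := by linarith
  have hζ : 0 < (c / 2) / (A - c) := by positivity
  -- u is bounded above (otherwise limsup would be 0, contradicting hexp)
  have hbdd : Filter.IsBoundedUnder (· ≤ ·) Filter.atTop u := by
    by_contra hb
    have hempty : {x : ℝ | ∀ᶠ n in Filter.atTop, u n ≤ x} = ∅ := by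
      ext x
      simp only [Set.mem_setOf_eq, Set.mem_empty_iff_false, iff_false]
      intro hx
      exact hb ⟨x, hx⟩
    have : Filter.limsup u Filter.atTop = 0 := by
      rw [Filter.limsup_eq]
      have : {x : ℝ | ∀ᶠ n in Filter.atTop, u n ≤ x} = ∅ := hempty
      rw [this, Real.sInf_empty]
    rw [this] at hexp
    linarith
  -- eventually averages are below -3c/2
  have hlt : ∀ᶠ n in Filter.atTop, u n < -(3 * c / 2) :=
    Filter.eventually_lt_of_limsup_lt (lt_of_le_of_lt hexp (by linarith)) hbdd
  -- eventually the density is at least ζ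
  have hev : ∀ᶠ n in Filter.atTop, (c / 2) / (A - c) ≤ v n := by
    filter_upwards [hlt, Filter.eventually_ge_atTop 1] with n hn hn1
    have hnpos : (0 : ℝ) < n := by exact_mod_cast hn1
    have hsum : (∑ j ∈ Finset.range n, a j) < -(3 * c / 2) * n := by
      have := (div_lt_iff₀ hnpos).mp hn
      linarith
    have hSn : Sseq c a n = (∑ j ∈ Finset.range n, a j) + c * n := by
      rw [Sseq, Finset.sum_add_distrib, Finset.sum_const, Finset.card_range,
        nsmul_eq_mul]
      ring
    have hkey := key c A hAc a hbound n n le_rfl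
    have h1 : c / 2 * n ≤ (A - c) * (hcount c a n : ℝ) := by nlinarith
    show (c / 2) / (A - c) ≤ (hcount c a n : ℝ) / (n : ℝ)
    rw [div_le_div_iff₀ hAc' hnpos]
    nlinarith
  constructor
  · apply Filter.le_liminf_of_le _ hev
    apply Filter.IsBoundedUnder.isCoboundedUnder_ge
    apply Filter.isBoundedUnder_of
    refine ⟨1, fun n => ?_⟩
    show v n ≤ 1
    rcases Nat.eq_zero_or_pos n with h0 | hpos
    · simp [hv, h0, hcount]
    · have hnpos : (0 : ℝ) < n := by exact_mod_cast hpos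
      have hle : hcount c a n ≤ n := by
        calc hcount c a n ≤ (Finset.Icc 1 n).card := Finset.card_filter_le _ _
        _ = n := by rw [Nat.card_Icc]; omega
      exact div_le_one_of_le₀ (by exact_mod_cast hle) hnpos.le
  · by_contra hinf
    have hfin : {n : ℕ | IsHyperbolicTime c a n}.Finite := Set.not_infinite.mp hinf
    set F := hfin.toFinset with hF
    have hsub : ∀ n, hcount c a n ≤ F.card := by
      intro n
      apply Finset.card_le_card
      intro m hm
      rw [hF, Set.Finite.mem_toFinset]
      exact (Finset.mem_filter.mp hm).2
    obtain ⟨N, hN⟩ := Filter.eventually_atTop.mp hev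
    obtain ⟨n, hn⟩ := exists_nat_gt ((F.card : ℝ) / ((c / 2) / (A - c)))
    set m := max n (max N 1) with hm
    have hmn : ((F.card : ℝ) / ((c / 2) / (A - c))) < m := by
      calc ((F.card : ℝ) / ((c / 2) / (A - c))) < n := hn
      _ ≤ m := by exact_mod_cast le_max_left _ _
    have hm1 : (1 : ℝ) ≤ m := by
      have : 1 ≤ m := le_trans (le_max_right N 1) (le_max_right n _)
      exact_mod_cast this
    have hvm := hN m (le_trans (le_max_left N 1) (le_max_right n _))
    have hmpos : (0 : ℝ) < m := by linarith
    have hFm : (c / 2) / (A - c) * m ≤ (F.card : ℝ) := by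
      have h1 : (c / 2) / (A - c) ≤ (hcount c a m : ℝ) / (m : ℝ) := hvm
      have h2 : (hcount c a m : ℝ) ≤ F.card := by exact_mod_cast hsub m
      have := (le_div_iff₀ hmpos).mp h1
      linarith
    have : (F.card : ℝ) < (c / 2) / (A - c) * m := by
      have := (div_lt_iff₀ hζ).mp hmn
      linarith [mul_comm ((c / 2) / (A - c)) (m : ℝ)]
    linarith
end

section
/- Let d ≥ 1, c > 0, ε₀ > 0 and let f₁, …, f_n be C¹ diffeomorphisms of ℝ^d. For x ∈ ℝ^d set x₀ = x and x_j = f_j(x_{j−1}) for 1 ≤ j ≤ n, and similarly z₀ = z, z_j = f_j(z_{j−1}). Assume: (i) for every 1 ≤ j ≤ n and all ξ, η ∈ ℝ^d with ‖ξ − η‖ ≤ ε₀ one has ‖Df_j(ξ)^{−1}‖ ≤ e^{c/2} ‖Df_j(η)^{−1}‖ (operator norms); (ii) n is a hyperbolic time for x with exponent c, i.e. ∏_{j=n−k+1}^{n} ‖Df_j(x_{j−1})^{−1}‖ ≤ e^{−ck} for every 1 ≤ k ≤ n. Then for every z ∈ ℝ^d with ‖z_n − x_n‖ ≤ ε₀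 and every 0 ≤ j ≤ n one has ‖z_{n−j} − x_{n−j}‖ ≤ e^{−cj/2} ‖z_n − x_n‖. -/
open Set Filter Topology

variable {E : Type*} [NormedAddCommGroup E] [NormedSpace ℝ E] [CompleteSpace E]

/-- One-step backward contraction for a global diffeomorphism. -/
lemma onestep_backward (g : E → E) (Dg : E → (E ≃L[ℝ] E))
    (hg : ContDiff ℝ 1 g) (hbij : Function.Bijective g)
    (hDg : ∀ ξ, HasFDerivAt g ((Dg ξ : E →L[ℝ] E)) ξ)
    (p q : E) (K ε₀ : ℝ) (hK : 0 ≤ K)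
    (hvarK : ∀ ξ : E, ‖ξ - p‖ ≤ ε₀ → ‖((Dg ξ).symm : E →L[ℝ] E)‖ ≤ K)
    (hsmall : K * ‖g q - g p‖ < ε₀) :
    ‖q - p‖ ≤ K * ‖g q - g p‖ := by
  classical
  set ginv : E → E := Function.invFun g with hginv
  have gli : Function.LeftInverse ginv g := Function.leftInverse_invFun hbij.1
  have gri : Function.RightInverse ginv g := Function.rightInverse_invFun hbij.2
  -- g is an open map
  have hstrict : ∀ a : E, HasStrictFDerivAt g ((Dg a : E →L[ℝ] E)) a := by
    intro a
    have h1 : HasStrictFDerivAt g (fderiv ℝ g a) a :=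
      (hg.contDiffAt).hasStrictFDerivAt one_ne_zero
    rwa [(hDg a).fderiv] at h1
  have hopen : IsOpenMap g := by
    apply IsOpenMap.of_nhds_le
    intro a
    exact ((hstrict a).map_nhds_eq_of_equiv).ge
  have hginvcont : Continuous ginv := by
    rw [continuous_def]
    intro U hU
    have : ginv ⁻¹' U = g '' U := by
      ext y
      constructor
      · intro hy
        exact ⟨ginv y, hy, gri y⟩
      · rintro ⟨u, hu, rfl⟩
        rwa [Set.mem_preimage, gli u]
    rw [this]
    exact hopen U hU
  have hdginv : ∀ w : E, HasFDerivAt ginv (((Dg (ginv w)).symm : E →L[ℝ] E)) w := by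
    intro w
    exact HasFDerivAt.of_local_left_inverse (hginvcont.continuousAt)
      (hDg (ginv w)) (Filter.Eventually.of_forall fun y => gri y)
  set b : E := g p with hb
  set v : E := g q - g p with hv
  set r : ℝ := ‖v‖ with hr
  have hr0 : 0 ≤ r := norm_nonneg _
  set w : ℝ → E := fun s => b + s • v with hw
  set h : ℝ → E := fun s => ginv (w s) with hh
  have hw0 : w 0 = b := by simp [hw]
  have hw1 : w 1 = g q := by simp [hw, hb, hv]
  have hh0 : h 0 = p := by simp [hh, hw0, hb, gli p]
  have hh1 : h 1 = q := by simp [hh, hw1, gli q]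
  have hwderiv : ∀ s : ℝ, HasDerivAt w v s := by
    intro s
    have h1 : HasDerivAt (fun s : ℝ => s • v) ((1:ℝ) • v) s :=
      (hasDerivAt_id s).smul_const v
    simpa [hw] using h1.const_add b
  have hhderiv : ∀ s : ℝ, HasDerivAt h (((Dg (h s)).symm : E →L[ℝ] E) v) s := by
    intro s
    exact (hdginv (w s)).comp_hasDerivAt s (hwderiv s)
  have hhcont : Continuous h := hginvcont.comp (by continuity)
  have hφcont : Continuous fun s => ‖h s - p‖ := (hhcont.sub continuous_const).norm
  -- the bootstrap set
  set A : Set ℝ := {t | t ∈ Icc (0:ℝ) 1 ∧ ∀ s ∈ Icc (0:ℝ) t, ‖h s - p‖ ≤ ε₀} with hA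
  have hA0 : (0:ℝ) ∈ A := by
    constructor
    · exact ⟨le_rfl, zero_le_one⟩
    · intro s hs
      have : s = 0 := le_antisymm hs.2 hs.1
      simp [this, hh0, le_of_lt (lt_of_le_of_lt (by positivity : (0:ℝ) ≤ K * r) hsmall)]
  have hAne : A.Nonempty := ⟨0, hA0⟩
  have hAbdd : BddAbove A := ⟨1, fun t ht => ht.1.2⟩
  set τ : ℝ := sSup A with hτ
  have hτ0 : 0 ≤ τ := le_csSup hAbdd hA0
  have hτ1 : τ ≤ 1 := csSup_le hAne fun t ht => ht.1.2
  have hlt : ∀ s : ℝ, 0 ≤ s → s < τ → ‖h s - p‖ ≤ ε₀ := by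
    intro s hs0 hsτ
    obtain ⟨t, htA, hst⟩ := exists_lt_of_lt_csSup hAne hsτ
    exact htA.2 s ⟨hs0, hst.le⟩
  have hτA : ∀ s ∈ Icc (0:ℝ) τ, ‖h s - p‖ ≤ ε₀ := by
    intro s hs
    rcases lt_or_eq_of_le hs.2 with hlt' | heq
    · exact hlt s hs.1 hlt'
    · rcases eq_or_lt_of_le hτ0 with h0 | h0
      · have hs0 : s = (0:ℝ) := by rw [heq, ← h0]
        rw [hs0]
        simp only [hh0, sub_self, norm_zero]
        exact le_of_lt (lt_of_le_of_lt (by positivity : (0:ℝ) ≤ K * r) hsmall)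
      · -- s = τ > 0 : limit from the left
        have hs0 : (0:ℝ) < s := heq ▸ h0
        have hne : (𝓝[Set.Iio s] s).NeBot := inferInstance
        refine le_of_tendsto (hφcont.continuousAt.tendsto.mono_left
          (nhdsWithin_le_nhds (s := Set.Iio s))) ?_
        filter_upwards [Ioo_mem_nhdsLT_of_mem (⟨hs0, le_rfl⟩ : s ∈ Ioc (0:ℝ) s)] with u hu
        exact hlt u hu.1.le (heq ▸ hu.2)
  -- mean value estimate on [0, τ']
  have hMVT : ∀ τ' : ℝ, 0 ≤ τ' → (∀ s ∈ Icc (0:ℝ) τ', ‖h s - p‖ ≤ ε₀) →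
      ∀ s ∈ Icc (0:ℝ) τ', ‖h s - p‖ ≤ K * r * s := by
    intro τ' hτ'0 hbound s hs
    have := norm_image_sub_le_of_norm_deriv_le_segment'
      (f := h) (f' := fun s => ((Dg (h s)).symm : E →L[ℝ] E) v)
      (a := 0) (b := τ') (C := K * r)
      (fun u hu => (hhderiv u).hasDerivWithinAt)
      (fun u hu => by
        calc ‖((Dg (h u)).symm : E →L[ℝ] E) v‖
            ≤ ‖((Dg (h u)).symm : E →L[ℝ] E)‖ * ‖v‖ := ContinuousLinearMap.le_opNorm _ _
          _ ≤ K * r := by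
              have := hvarK (h u) (hbound u ⟨hu.1, hu.2.le⟩)
              exact mul_le_mul_of_nonneg_right this hr0) s hs
    simpa [hh0] using this
  -- τ = 1
  have hτeq : τ = 1 := by
    by_contra hne
    have hτlt : τ < 1 := lt_of_le_of_ne hτ1 hne
    have hφτ : ‖h τ - p‖ < ε₀ := by
      have h1 := hMVT τ hτ0 hτA τ ⟨hτ0, le_rfl⟩
      calc ‖h τ - p‖ ≤ K * r * τ := h1
        _ ≤ K * r := by nlinarith [mul_nonneg hK hr0]
        _ < ε₀ := hsmall
    -- extend beyond τ
    have hcont : ContinuousAt (fun s => ‖h s - p‖) τ := hφcont.continuousAt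
    obtain ⟨δ, hδ0, hδ⟩ := Metric.continuousAt_iff.1 hcont (ε₀ - ‖h τ - p‖) (by linarith)
    set τ' : ℝ := min 1 (τ + δ / 2) with hτ'
    have hττ' : τ < τ' := lt_min hτlt (by linarith)
    have hτ'A : τ' ∈ A := by
      refine ⟨⟨by positivity, min_le_left _ _⟩, ?_⟩
      intro s hs
      rcases le_or_gt s τ with hsτ | hsτ
      · exact hτA s ⟨hs.1, hsτ⟩
      · have hd : dist s τ < δ := by
          rw [Real.dist_eq, abs_of_pos (by linarith)]
          have : s ≤ τ + δ / 2 := le_trans hs.2 (min_le_right _ _)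
          linarith
        have := hδ hd
        rw [Real.dist_eq] at this
        have := abs_lt.1 this
        linarith [this.1, this.2]
    have : τ' ≤ τ := le_csSup hAbdd hτ'A
    linarith
  have hfinal := hMVT τ hτ0 hτA 1 ⟨zero_le_one, hτeq.ge⟩
  rw [hh1] at hfinal
  calc ‖q - p‖ ≤ K * r * 1 := hfinal
    _ = K * ‖g q - g p‖ := by rw [mul_one]

/-- **Backward contraction at hyperbolic times.** Let `f 0, …, f (n-1)` be C¹ diffeomorphisms
of `ℝ^d` with invertible derivatives `Df`, such that on `ε₀`-balls the norms of inverse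
derivatives vary by a factor at most `e^{c/2}`. Let `x` and `z` be orbits:
`x (j+1) = f j (x j)`, `z (j+1) = f j (z j)`. If `n` is a hyperbolic time for `x` with
exponent `c` (i.e. `∏_{j=n-k}^{n-1} ‖Df j (x j)⁻¹‖ ≤ e^{-ck}` for `1 ≤ k ≤ n`) and
`‖z n - x n‖ ≤ ε₀`, then `‖z (n-j) - x (n-j)‖ ≤ e^{-cj/2} ‖z n - x n‖` for all `0 ≤ j ≤ n`. -/
theorem backward_contraction_at_hyperbolic_times
    (d : ℕ) (hd : 1 ≤ d) (c ε₀ : ℝ) (hc : 0 < c) (hε₀ : 0 < ε₀) (n : ℕ)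
    (f : ℕ → EuclideanSpace ℝ (Fin d) → EuclideanSpace ℝ (Fin d))
    (Df : ℕ → EuclideanSpace ℝ (Fin d) →
      (EuclideanSpace ℝ (Fin d) ≃L[ℝ] EuclideanSpace ℝ (Fin d)))
    (hdiffeo : ∀ j < n, ContDiff ℝ 1 (f j) ∧ Function.Bijective (f j))
    (hDf : ∀ j < n, ∀ ξ, HasFDerivAt (f j)
      ((Df j ξ : EuclideanSpace ℝ (Fin d) →L[ℝ] EuclideanSpace ℝ (Fin d))) ξ)
    (hvar : ∀ j < n, ∀ ξ η : EuclideanSpace ℝ (Fin d), ‖ξ - η‖ ≤ ε₀ →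
      ‖((Df j ξ).symm : EuclideanSpace ℝ (Fin d) →L[ℝ] EuclideanSpace ℝ (Fin d))‖ ≤
        Real.exp (c / 2) *
          ‖((Df j η).symm : EuclideanSpace ℝ (Fin d) →L[ℝ] EuclideanSpace ℝ (Fin d))‖)
    (x z : ℕ → EuclideanSpace ℝ (Fin d))
    (hx : ∀ j < n, x (j + 1) = f j (x j))
    (hz : ∀ j < n, z (j + 1) = f j (z j))
    (hhyp : ∀ k, 1 ≤ k → k ≤ n →
      (∏ j ∈ Finset.Ico (n - k) n,
        ‖((Df j (x j)).symm : EuclideanSpace ℝ (Fin d) →L[ℝ] EuclideanSpace ℝ (Fin d))‖) ≤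
        Real.exp (-c * (k : ℝ)))
    (hclose : ‖z n - x n‖ ≤ ε₀) :
    ∀ j ≤ n, ‖z (n - j) - x (n - j)‖ ≤ Real.exp (-c * (j : ℝ) / 2) * ‖z n - x n‖ := by
  set N : ℝ := ‖z n - x n‖ with hN
  -- trivial case : z n = x n
  rcases eq_or_lt_of_le (norm_nonneg (z n - x n)) with hN0 | hNpos
  · have hzx : ∀ j ≤ n, z (n - j) = x (n - j) := by
      intro j hj
      induction j with
      | zero =>
        simpa using sub_eq_zero.1 (norm_eq_zero.1 hN0.symm)
      | succ k ih =>
        have hk : k ≤ n := Nat.le_of_succ_le hj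
        have hkk := ih hk
        have hm : n - k = (n - (k + 1)) + 1 := by omega
        have hmn : n - (k + 1) < n := by omega
        have h1 : f (n - (k+1)) (z (n - (k+1))) = f (n - (k+1)) (x (n - (k+1))) := by
          rw [← hz _ hmn, ← hx _ hmn, ← hm, hkk]
        exact (hdiffeo _ hmn).2.1 h1
    intro j hj
    rw [hzx j hj, sub_self, norm_zero, hN, ← hN0, mul_zero]
  -- main case
  set D : ℕ → ℝ := fun j => ‖((Df j (x j)).symm : EuclideanSpace ℝ (Fin d) →L[ℝ] EuclideanSpace ℝ (Fin d))‖ with hD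
  set P : ℕ → ℝ := fun k => ∏ j ∈ Finset.Ico (n - k) n, (Real.exp (c/2) * D j) with hP
  have hPnonneg : ∀ k, 0 ≤ P k := by
    intro k
    apply Finset.prod_nonneg
    intro j _
    positivity
  have hB : ∀ k ≤ n, P k ≤ Real.exp (-c * (k : ℝ) / 2) := by
    intro k hk
    rcases Nat.eq_zero_or_pos k with rfl | hk1
    · simp [hP]
    · have hcard : (Finset.Ico (n - k) n).card = k := by
        rw [Nat.card_Ico]; omega
      have hsplit : P k = Real.exp (c/2) ^ k * ∏ j ∈ Finset.Ico (n - k) n, D j := by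
        simp only [hP]
        rw [Finset.prod_mul_distrib, Finset.prod_const, hcard]
      rw [hsplit]
      have h1 : (∏ j ∈ Finset.Ico (n - k) n, D j) ≤ Real.exp (-c * (k : ℝ)) :=
        hhyp k hk1 hk
      calc Real.exp (c/2) ^ k * ∏ j ∈ Finset.Ico (n - k) n, D j
          ≤ Real.exp (c/2) ^ k * Real.exp (-c * (k : ℝ)) := by
            apply mul_le_mul_of_nonneg_left h1 (by positivity)
        _ = Real.exp (-c * (k : ℝ) / 2) := by
            rw [← Real.exp_nat_mul, ← Real.exp_add]
            ring_nf
  have hA : ∀ k ≤ n, ‖z (n - k) - x (n - k)‖ ≤ P k * N := by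
    intro k hk
    induction k with
    | zero => simp [hP, hN]
    | succ k ih =>
      have hk' : k ≤ n := Nat.le_of_succ_le hk
      have ihk := ih hk'
      set m := n - (k + 1) with hmdef
      have hmn : m < n := by omega
      have hm : n - k = m + 1 := by omega
      have hPsucc : P (k + 1) = (Real.exp (c/2) * D m) * P k := by
        simp only [hP]
        rw [show n - (k+1) = m from rfl,
          Finset.prod_eq_prod_Ico_succ_bot hmn (fun j => Real.exp (c/2) * D j), ← hm]
      have hprev : ‖z (m + 1) - x (m + 1)‖ ≤ P k * N := by rw [← hm]; exact ihk
      have hsmall : (Real.exp (c/2) * D m) * ‖f m (z m) - f m (x m)‖ < ε₀ := by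
        rw [← hz m hmn, ← hx m hmn]
        calc (Real.exp (c/2) * D m) * ‖z (m+1) - x (m+1)‖
            ≤ (Real.exp (c/2) * D m) * (P k * N) := by
              apply mul_le_mul_of_nonneg_left hprev (by positivity)
          _ = P (k+1) * N := by rw [hPsucc]; ring
          _ ≤ Real.exp (-c * ((k:ℝ)+1) / 2) * N := by
              have := hB (k+1) hk
              push_cast at this ⊢
              exact mul_le_mul_of_nonneg_right this hNpos.le
          _ < 1 * N := by
              apply mul_lt_mul_of_pos_right _ hNpos
              apply Real.exp_lt_one_iff.2
              have : (0:ℝ) < c * ((k:ℝ) + 1) := by positivity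
              nlinarith
          _ = N := one_mul N
          _ ≤ ε₀ := hclose
      have hstep := onestep_backward (f m) (Df m) (hdiffeo m hmn).1 (hdiffeo m hmn).2
        (fun ξ => hDf m hmn ξ) (x m) (z m) (Real.exp (c/2) * D m) ε₀
        (by positivity)
        (fun ξ hξ => hvar m hmn ξ (x m) hξ)
        hsmall
      calc ‖z m - x m‖ ≤ (Real.exp (c/2) * D m) * ‖f m (z m) - f m (x m)‖ := hstep
        _ = (Real.exp (c/2) * D m) * ‖z (m+1) - x (m+1)‖ := by rw [← hz m hmn, ← hx m hmn]
        _ ≤ (Real.exp (c/2) * D m) * (P k * N) := by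
            apply mul_le_mul_of_nonneg_left hprev (by positivity)
        _ = P (k+1) * N := by rw [hPsucc]; ring
  intro j hj
  calc ‖z (n - j) - x (n - j)‖ ≤ P j * N := hA j hj
    _ ≤ Real.exp (-c * (j : ℝ) / 2) * N := mul_le_mul_of_nonneg_right (hB j hj) hNpos.le
end

section
/- Let p, q ≥ 1 be integers and let σ > q be a real number. Then there exist γ₀ ∈ (0, 1) and τ ∈ (0, 1) such that for every integer n ≥ 1, σ^{−(1−γ₀)n} · Σ_{0 ≤ k ≤ γ₀ n} C(n,k)·p^k·q^{n−k} ≤ τ^n. -/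
open Real Finset

/-- Let `p, q ≥ 1` be integers and `σ > q` real. Then there exist `γ₀, τ ∈ (0,1)` such that
for every `n ≥ 1`, `σ^{-(1-γ₀)n} * ∑_{0 ≤ k ≤ γ₀ n} C(n,k) p^k q^{n-k} ≤ τ^n`. -/
theorem volume_of_bad_itineraries_exponentially_small
    (p q : ℕ) (hp : 1 ≤ p) (hq : 1 ≤ q) (σ : ℝ) (hσ : (q : ℝ) < σ) :
    ∃ γ₀ τ : ℝ, 0 < γ₀ ∧ γ₀ < 1 ∧ 0 < τ ∧ τ < 1 ∧
      ∀ n : ℕ, 1 ≤ n →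
        σ ^ (-(1 - γ₀) * (n : ℝ)) *
          (∑ k ∈ (Finset.range (n + 1)).filter (fun k : ℕ => ((k : ℝ) ≤ γ₀ * n)),
            ((n.choose k : ℝ) * (p : ℝ) ^ k * (q : ℝ) ^ (n - k))) ≤ τ ^ n := by
  have hp' : (0:ℝ) < p := by exact_mod_cast Nat.lt_of_lt_of_le Nat.zero_lt_one hp
  have hq1 : (1:ℝ) ≤ q := by exact_mod_cast hq
  have hσ1 : 1 < σ := lt_of_le_of_lt hq1 hσ
  have hσ0 : 0 < σ := lt_trans one_pos hσ1
  set x : ℝ := min 1 ((σ - q) / (2 * p)) with hxdef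
  have hx0 : 0 < x := lt_min one_pos (div_pos (by linarith) (by positivity))
  have hx1 : x ≤ 1 := min_le_left _ _
  have hpxq0 : (0:ℝ) < (p:ℝ) * x + q := by positivity
  have hpxq : (p:ℝ) * x + q < σ := by
    have h1 : (p:ℝ) * x ≤ (p:ℝ) * ((σ - q) / (2 * p)) :=
      mul_le_mul_of_nonneg_left (min_le_right _ _) (le_of_lt hp')
    have h2 : (p:ℝ) * ((σ - q) / (2 * p)) = (σ - q) / 2 := by
      field_simp
    nlinarith
  have hr1 : 1 < σ / x := by
    rw [lt_div_iff₀ hx0]; nlinarith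
  have hr0 : 0 < σ / x := lt_trans one_pos hr1
  have hc1 : 1 < σ / ((p:ℝ) * x + q) := (one_lt_div hpxq0).2 hpxq
  have hlogc : 0 < Real.log (σ / ((p:ℝ) * x + q)) := Real.log_pos hc1
  have hlogr : 0 < Real.log (σ / x) := Real.log_pos hr1
  set γ : ℝ := min (1/2) (Real.log (σ / ((p:ℝ) * x + q)) / (2 * Real.log (σ / x)))
    with hγdef
  have hγ0 : 0 < γ := lt_min (by norm_num) (by positivity)
  have hγ1 : γ < 1 := lt_of_le_of_lt (min_le_left _ _) (by norm_num)
  -- key: (σ/x)^γ * (p x + q) < σ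
  have hkey : (σ / x) ^ γ * ((p:ℝ) * x + q) < σ := by
    have h1 : (σ / x) ^ γ < σ / ((p:ℝ) * x + q) := by
      have h2 : γ * Real.log (σ / x) ≤ Real.log (σ / ((p:ℝ) * x + q)) / 2 := by
        have h3 : γ ≤ Real.log (σ / ((p:ℝ) * x + q)) / (2 * Real.log (σ / x)) :=
          min_le_right _ _
        calc γ * Real.log (σ / x)
            ≤ Real.log (σ / ((p:ℝ) * x + q)) / (2 * Real.log (σ / x)) * Real.log (σ / x) :=
              mul_le_mul_of_nonneg_right h3 (le_of_lt hlogr)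
          _ = Real.log (σ / ((p:ℝ) * x + q)) / 2 := by field_simp
      calc (σ / x) ^ γ = Real.exp (Real.log (σ / x) * γ) := Real.rpow_def_of_pos hr0 γ
        _ ≤ Real.exp (Real.log (σ / ((p:ℝ) * x + q)) / 2) := by
            apply Real.exp_le_exp.2; linarith [h2, mul_comm γ (Real.log (σ / x))]
        _ < Real.exp (Real.log (σ / ((p:ℝ) * x + q))) := by
            apply Real.exp_lt_exp.2; linarith
        _ = σ / ((p:ℝ) * x + q) := Real.exp_log (by positivity)
    calc (σ / x) ^ γ * ((p:ℝ) * x + q)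
        < σ / ((p:ℝ) * x + q) * ((p:ℝ) * x + q) :=
          mul_lt_mul_of_pos_right h1 hpxq0
      _ = σ := by field_simp
  set τ : ℝ := σ ^ (-(1 - γ)) * x ^ (-γ) * ((p:ℝ) * x + q) with hτdef
  have hτ0 : 0 < τ := by
    apply mul_pos (mul_pos _ _) hpxq0 <;> exact Real.rpow_pos_of_pos (by positivity) _
  have hτeq : τ = (σ / x) ^ γ * ((p:ℝ) * x + q) / σ := by
    rw [hτdef]
    have e1 : σ ^ (-(1 - γ)) = σ ^ γ * σ⁻¹ := by
      rw [show -(1 - γ) = γ + (-1) by ring, Real.rpow_add hσ0, Real.rpow_neg_one]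
    have e2 : x ^ (-γ) = (x⁻¹) ^ γ := by
      rw [← Real.rpow_neg_one x, ← Real.rpow_mul (le_of_lt hx0)]
      ring_nf
    have e3 : σ ^ γ * (x⁻¹) ^ γ = (σ / x) ^ γ := by
      rw [← Real.mul_rpow (le_of_lt hσ0) (by positivity)]
      rw [div_eq_mul_inv]
    rw [e1, e2]
    rw [show σ ^ γ * σ⁻¹ * (x⁻¹) ^ γ = σ ^ γ * (x⁻¹) ^ γ * σ⁻¹ by ring, e3]
    ring
  have hτ1 : τ < 1 := by
    rw [hτeq, div_lt_one hσ0]; exact hkey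
  refine ⟨γ, τ, hγ0, hγ1, hτ0, hτ1, ?_⟩
  intro n hn
  -- bound the sum
  have hsum : (∑ k ∈ (Finset.range (n + 1)).filter (fun k : ℕ => ((k : ℝ) ≤ γ * n)),
      ((n.choose k : ℝ) * (p : ℝ) ^ k * (q : ℝ) ^ (n - k)))
      ≤ x ^ (-(γ * n)) * ((p:ℝ) * x + q) ^ n := by
    have hterm : ∀ k ∈ (Finset.range (n + 1)).filter (fun k : ℕ => ((k : ℝ) ≤ γ * n)),
        (n.choose k : ℝ) * (p : ℝ) ^ k * (q : ℝ) ^ (n - k)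
        ≤ x ^ (-(γ * n)) * ((n.choose k : ℝ) * ((p:ℝ) * x) ^ k * (q : ℝ) ^ (n - k)) := by
      intro k hk
      rw [Finset.mem_filter] at hk
      obtain ⟨hk1, hk2⟩ := hk
      have h1 : (1:ℝ) ≤ x ^ ((k:ℝ) - γ * n) := by
        apply Real.one_le_rpow_of_pos_of_le_one_of_nonpos hx0 hx1
        linarith
      have h2 : x ^ ((k:ℝ) - γ * n) = x ^ k * x ^ (-(γ * n)) := by
        rw [show (k:ℝ) - γ * n = (k:ℝ) + (-(γ * n)) by ring, Real.rpow_add hx0,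
          Real.rpow_natCast]
      calc (n.choose k : ℝ) * (p : ℝ) ^ k * (q : ℝ) ^ (n - k)
          = ((n.choose k : ℝ) * (p : ℝ) ^ k * (q : ℝ) ^ (n - k)) * 1 := by ring
        _ ≤ ((n.choose k : ℝ) * (p : ℝ) ^ k * (q : ℝ) ^ (n - k)) *
              (x ^ k * x ^ (-(γ * n))) := by
            apply mul_le_mul_of_nonneg_left _ (by positivity)
            rw [← h2]; exact h1
        _ = x ^ (-(γ * n)) * ((n.choose k : ℝ) * ((p:ℝ) * x) ^ k * (q : ℝ) ^ (n - k)) := by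
            rw [mul_pow]; ring
    calc (∑ k ∈ (Finset.range (n + 1)).filter (fun k : ℕ => ((k : ℝ) ≤ γ * n)),
          ((n.choose k : ℝ) * (p : ℝ) ^ k * (q : ℝ) ^ (n - k)))
        ≤ ∑ k ∈ (Finset.range (n + 1)).filter (fun k : ℕ => ((k : ℝ) ≤ γ * n)),
            x ^ (-(γ * n)) * ((n.choose k : ℝ) * ((p:ℝ) * x) ^ k * (q : ℝ) ^ (n - k)) :=
          Finset.sum_le_sum hterm
      _ ≤ ∑ k ∈ Finset.range (n + 1),
            x ^ (-(γ * n)) * ((n.choose k : ℝ) * ((p:ℝ) * x) ^ k * (q : ℝ) ^ (n - k)) := by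
          apply Finset.sum_le_sum_of_subset_of_nonneg (Finset.filter_subset _ _)
          intro k _ _
          positivity
      _ = x ^ (-(γ * n)) * ∑ k ∈ Finset.range (n + 1),
            ((p:ℝ) * x) ^ k * (q : ℝ) ^ (n - k) * (n.choose k : ℝ) := by
          rw [Finset.mul_sum]; apply Finset.sum_congr rfl; intro k _; ring
      _ = x ^ (-(γ * n)) * ((p:ℝ) * x + q) ^ n := by
          rw [← add_pow]
  have hpow : σ ^ (-(1 - γ) * (n : ℝ)) * (x ^ (-(γ * n)) * ((p:ℝ) * x + q) ^ n) = τ ^ n := by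
    rw [hτdef, mul_pow, mul_pow, ← Real.rpow_natCast (σ ^ (-(1 - γ))) n,
      ← Real.rpow_natCast (x ^ (-γ)) n,
      ← Real.rpow_mul (le_of_lt hσ0), ← Real.rpow_mul (le_of_lt hx0)]
    ring_nf
  rw [← hpow]
  apply mul_le_mul_of_nonneg_left hsum
  positivity
end
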